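/- arXiv:2102.05283 — 9 statements merged into one kernel-verified Lean document; each statement's English description precedes it below -/
import Mathlib

section
/- There is no fixed point (x,y,u,v) of W in S^{2,2} with x ≠ 0 and v ≠ 0; equivalently, the set of fixed points of W equals F11 ∪ F12 where F11 = {(0,a,u,v) : u+v = b, u,v ∈ [0,b]} and F12 = {(x,y,b,0) : x+y = a, x,y ∈ [0,a]}. -/
noncomputable def W (a b s1 s2 : ℝ) (p : ℝ × ℝ × ℝ × ℝ) : ℝ × ℝ × ℝ × ℝ :=
  (a * p.1 * p.2.2.1 / ((p.1 + p.2.1) * (p.2.2.1 + p.2.2.2)),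
   (s1 * p.1 * p.2.2.2 + a * p.2.1 * p.2.2.1 + a * p.2.1 * p.2.2.2) /
     ((p.1 + p.2.1) * (p.2.2.1 + p.2.2.2)),
   (s2 * p.1 * p.2.2.2 + b * p.1 * p.2.2.1 + b * p.2.1 * p.2.2.1) /
     ((p.1 + p.2.1) * (p.2.2.1 + p.2.2.2)),
   b * p.2.1 * p.2.2.2 / ((p.1 + p.2.1) * (p.2.2.1 + p.2.2.2)))

def S22 : Set (ℝ × ℝ × ℝ × ℝ) :=
  {p | 0 ≤ p.1 ∧ 0 ≤ p.2.1 ∧ 0 ≤ p.2.2.1 ∧ 0 ≤ p.2.2.2 ∧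
    p.1 + p.2.1 + p.2.2.1 + p.2.2.2 = 1 ∧
    (p.1, p.2.1) ≠ ((0 : ℝ), (0 : ℝ)) ∧ (p.2.2.1, p.2.2.2) ≠ ((0 : ℝ), (0 : ℝ))}

theorem stmt2 (a b s1 s2 : ℝ) (ha : 0 < a) (hb : 0 < b) (hs1 : 0 < s1) (hs2 : 0 < s2)
    (hab : a + b = 1) (hs : s1 + s2 = 1)
    (p : ℝ × ℝ × ℝ × ℝ) (hp : p ∈ S22) :
    W a b s1 s2 p = p ↔
      ((p.1 = 0 ∧ p.2.1 = a ∧ p.2.2.1 + p.2.2.2 = b ∧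
         p.2.2.1 ∈ Set.Icc (0 : ℝ) b ∧ p.2.2.2 ∈ Set.Icc (0 : ℝ) b) ∨
       (p.2.2.1 = b ∧ p.2.2.2 = 0 ∧ p.1 + p.2.1 = a ∧
         p.1 ∈ Set.Icc (0 : ℝ) a ∧ p.2.1 ∈ Set.Icc (0 : ℝ) a)) := by
  obtain ⟨x, y, u, v⟩ := p
  simp only [S22, Set.mem_setOf_eq] at hp
  obtain ⟨hx0, hy0, hu0, hv0, hsum, hne1, hne2⟩ := hp
  simp only at hx0 hy0 hu0 hv0 hsum hne1 hne2 ⊢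
  have hX : 0 < x + y := by
    rcases (add_nonneg hx0 hy0).lt_or_eq with h | h
    · exact h
    · exact absurd (by simp [show x = 0 by linarith, show y = 0 by linarith]) hne1
  have hU : 0 < u + v := by
    rcases (add_nonneg hu0 hv0).lt_or_eq with h | h
    · exact h
    · exact absurd (by simp [show u = 0 by linarith, show v = 0 by linarith]) hne2
  have hD : 0 < (x + y) * (u + v) := mul_pos hX hU
  constructor
  · intro h
    simp only [W, Prod.mk.injEq] at h
    obtain ⟨e1, e2, e3, e4⟩ := h
    rw [div_eq_iff hD.ne'] at e1 e2 e3 e4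
    by_cases hx : x = 0
    · left
      subst hx
      have hy : 0 < y := by linarith
      have hya : y * (u + v) * a = y * (u + v) * y := by linear_combination e2
      have hya' : a = y := mul_left_cancel₀ (mul_pos hy hU).ne' hya
      refine ⟨rfl, hya'.symm, by linarith, ⟨hu0, by linarith⟩, ⟨hv0, by linarith⟩⟩
    · by_cases hv : v = 0
      · right
        subst hv
        have hu : 0 < u := by linarith
        have hub : (x + y) * u * b = (x + y) * u * u := by linear_combination e3
        have hub' : b = u := mul_left_cancel₀ (mul_pos hX hu).ne' hub
        refine ⟨hub'.symm, rfl, by linarith, ⟨hx0, by linarith⟩, ⟨hy0, by linarith⟩⟩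
      · exfalso
        have hx' : 0 < x := lt_of_le_of_ne hx0 (Ne.symm hx)
        have hv' : 0 < v := lt_of_le_of_ne hv0 (Ne.symm hv)
        have e4c : v * (b * y) = v * ((x + y) * (u + v)) := by linear_combination e4
        have hby : b * y = (x + y) * (u + v) := mul_left_cancel₀ hv'.ne' e4c
        have hy : 0 < y := by nlinarith
        have e1c : x * (a * u) = x * ((x + y) * (u + v)) := by linear_combination e1
        have hau : a * u = (x + y) * (u + v) := mul_left_cancel₀ hx'.ne' e1c
        have hu : 0 < u := by nlinarith
        have h2 : s1 * (x * v) = y * (u + v) * (x + y - a) := by linear_combination e2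
        have h3 : s2 * (x * v) = u * (x + y) * (u + v - b) := by linear_combination e3
        have hxv : 0 < x * v := mul_pos hx' hv'
        have ht1 : 0 < x + y - a := by nlinarith [mul_pos hy hU, mul_pos hs1 hxv]
        have ht2 : 0 < u + v - b := by nlinarith [mul_pos hu hX, mul_pos hs2 hxv]
        linarith
  · intro h
    rcases h with ⟨h1, h2, h3, h4, h5⟩ | ⟨h1, h2, h3, h4, h5⟩
    · simp only [W, Prod.mk.injEq]
      refine ⟨?_, ?_, ?_, ?_⟩ <;> rw [div_eq_iff hD.ne']
      · linear_combination (a * u - (x + y) * (u + v)) * h1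
      · linear_combination (s1 * v - y * (u + v)) * h1 - y * (u + v) * h2
      · linear_combination (s2 * v + b * u - u * (u + v)) * h1 - u * y * h3
      · linear_combination (-(v * (u + v))) * h1 - v * y * h3
    · simp only [W, Prod.mk.injEq]
      refine ⟨?_, ?_, ?_, ?_⟩ <;> rw [div_eq_iff hD.ne']
      · linear_combination (-(x * (x + y))) * h2 - x * u * h3
      · linear_combination (s1 * x + a * y - y * (x + y)) * h2 - y * u * h3
      · linear_combination (s2 * x - u * (x + y)) * h2 - (x + y) * u * h1
      · linear_combination (b * y - (x + y) * (u + v)) * h2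
end

section
/- If t = (x,y,u,v) ∈ S^{2,2} with y = 0, then W(t) has fourth coordinate 0 and W²(t) ∈ F12 = {(x,y,b,0) : x+y = a, x,y ≥ 0}. -/
theorem stmt5 (a b s1 s2 : ℝ) (ha : 0 < a) (hb : 0 < b) (hs1 : 0 < s1) (hs2 : 0 < s2)
    (hab : a + b = 1) (hs : s1 + s2 = 1)
    (t : ℝ × ℝ × ℝ × ℝ) (ht : t ∈ S22) (hy : t.2.1 = 0) :
    (W a b s1 s2 t).2.2.2 = 0 ∧
    (W a b s1 s2 (W a b s1 s2 t)).2.2.1 = b ∧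
    (W a b s1 s2 (W a b s1 s2 t)).2.2.2 = 0 ∧
    (W a b s1 s2 (W a b s1 s2 t)).1 + (W a b s1 s2 (W a b s1 s2 t)).2.1 = a ∧
    0 ≤ (W a b s1 s2 (W a b s1 s2 t)).1 ∧ 0 ≤ (W a b s1 s2 (W a b s1 s2 t)).2.1 := by
  obtain ⟨x, y, u, v⟩ := t
  obtain ⟨hx, hy', hu, hv, hsum, hne1, hne2⟩ := ht
  simp only at hx hy' hu hv hsum hne1 hne2
  simp only at hy
  subst hy
  have hxpos : 0 < x := by
    rcases hx.lt_or_eq with h | h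
    · exact h
    · exact absurd (by simp [← h]) hne1
  have hDpos : 0 < u + v := by
    rcases hu.lt_or_eq with h | h
    · linarith
    · rcases hv.lt_or_eq with h2 | h2
      · linarith
      · exact absurd (by simp [← h, ← h2]) hne2
  have hA : 0 < a * u + s1 * v := by
    rcases hu.lt_or_eq with h | h
    · nlinarith
    · rcases hv.lt_or_eq with h2 | h2
      · nlinarith
      · exact absurd (by simp [← h, ← h2]) hne2
  have hB : 0 < s2 * v + b * u := by
    rcases hu.lt_or_eq with h | h
    · nlinarith
    · rcases hv.lt_or_eq with h2 | h2
      · nlinarith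
      · exact absurd (by simp [← h, ← h2]) hne2
  have hWt : W a b s1 s2 (x, 0, u, v)
      = (a * u / (u + v), s1 * v / (u + v), (s2 * v + b * u) / (u + v), 0) := by
    simp only [W, Prod.mk.injEq]
    refine ⟨?_, ?_, ?_, ?_⟩ <;> field_simp <;> ring
  rw [hWt]
  have hXY : (0:ℝ) < a * u / (u + v) + s1 * v / (u + v) := by
    rw [← add_div]; exact div_pos hA hDpos
  have hU : (0:ℝ) < (s2 * v + b * u) / (u + v) := div_pos hB hDpos
  refine ⟨by simp, ?_, by simp [W], ?_, ?_, ?_⟩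
  · simp only [W]
    rw [div_eq_iff (by simp only [add_zero]; exact (mul_pos hXY hU).ne')]
    ring
  · simp only [W]
    rw [← add_div]
    rw [div_eq_iff (by positivity)]
    ring
  · simp only [W]
    positivity
  · simp only [W]
    positivity
end

section
/- For any (α,β) ∈ [0,1]², the sequence of products α^(m)·β^(m) of the coordinates of the iterates V^m(α,β) converges to 0 as m → ∞. -/
noncomputable def V (p1 p2 : ℝ) (q : ℝ × ℝ) : ℝ × ℝ :=
  (q.1 * (1 - q.2) / (1 + (p1 - 1) * q.1 * q.2),
   q.2 * (1 - q.1) / (1 + (p2 - 1) * q.1 * q.2))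

lemma Dpos {p α β : ℝ} (hp : 0 < p) (hα : 0 ≤ α) (hα1 : α ≤ 1)
    (hβ : 0 ≤ β) (hβ1 : β ≤ 1) : 0 < 1 + (p - 1) * α * β := by
  rcases eq_or_lt_of_le (mul_nonneg hα hβ) with h | h
  · nlinarith
  · nlinarith [mul_pos hp h, mul_le_one₀ hα1 hβ hβ1]

lemma mem_box (p1 p2 : ℝ) (hp1 : 0 < p1) (hp2 : 0 < p2)
    (q : ℝ × ℝ) (hq : q ∈ Set.Icc (0 : ℝ) 1 ×ˢ Set.Icc (0 : ℝ) 1) :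
    V p1 p2 q ∈ Set.Icc (0 : ℝ) 1 ×ˢ Set.Icc (0 : ℝ) 1 := by
  obtain ⟨⟨hα, hα1⟩, hβ, hβ1⟩ := hq
  have hD1 := Dpos hp1 hα hα1 hβ hβ1
  have hD2 := Dpos hp2 hα hα1 hβ hβ1
  refine ⟨⟨div_nonneg (by nlinarith) hD1.le, ?_⟩,
    div_nonneg (by nlinarith) hD2.le, ?_⟩
  · show q.1 * (1 - q.2) / (1 + (p1 - 1) * q.1 * q.2) ≤ 1
    rw [div_le_one hD1]
    nlinarith [mul_nonneg (mul_nonneg hp1.le hα) hβ]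
  · show q.2 * (1 - q.1) / (1 + (p2 - 1) * q.1 * q.2) ≤ 1
    rw [div_le_one hD2]
    nlinarith [mul_nonneg (mul_nonneg hp2.le hα) hβ]

lemma key (p1 p2 : ℝ) (hp1 : 0 < p1) (hp2 : 0 < p2)
    (q : ℝ × ℝ) (hq : q ∈ Set.Icc (0 : ℝ) 1 ×ˢ Set.Icc (0 : ℝ) 1) :
    (V p1 p2 q).1 * (V p1 p2 q).2 * (1 + Real.sqrt (q.1 * q.2)) ^ 2
      ≤ q.1 * q.2 := by
  obtain ⟨⟨hα, hα1⟩, hβ, hβ1⟩ := hq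
  set α := q.1
  set β := q.2
  have hD1 := Dpos hp1 hα hα1 hβ hβ1
  have hD2 := Dpos hp2 hα hα1 hβ hβ1
  have ht : 0 ≤ α * β := mul_nonneg hα hβ
  set s := Real.sqrt (α * β) with hsdef
  have hs2 : s ^ 2 = α * β := Real.sq_sqrt ht
  have hs0 : 0 ≤ s := Real.sqrt_nonneg _
  have hab : 2 * s ≤ α + β := by
    have h := two_mul_le_add_sq (Real.sqrt α) (Real.sqrt β)
    rw [Real.sq_sqrt hα, Real.sq_sqrt hβ] at h
    rw [hsdef, Real.sqrt_mul hα]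
    linarith
  have h1 : (1 - α) * (1 - β) ≤ (1 - s) ^ 2 := by nlinarith
  have h2 : (1 - α) * (1 - β) * (1 + s) ^ 2 ≤ (1 - α * β) ^ 2 := by
    nlinarith [sq_nonneg (1 + s), sq_nonneg (1 - s)]
  have h3 : (1 - α * β) ^ 2 ≤ (1 + (p1 - 1) * α * β) * (1 + (p2 - 1) * α * β) := by
    nlinarith [mul_nonneg (mul_nonneg hp1.le hα) hβ,
      mul_nonneg (mul_nonneg hp2.le hα) hβ,
      mul_le_one₀ hα1 hβ hβ1,
      mul_nonneg (mul_nonneg (mul_nonneg hp1.le hα) hβ)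
        (mul_nonneg (mul_nonneg hp2.le hα) hβ)]
  show α * (1 - β) / (1 + (p1 - 1) * α * β) * (β * (1 - α) / (1 + (p2 - 1) * α * β))
      * (1 + s) ^ 2 ≤ α * β
  rw [div_mul_div_comm, div_mul_eq_mul_div, div_le_iff₀ (mul_pos hD1 hD2)]
  calc α * (1 - β) * (β * (1 - α)) * (1 + s) ^ 2
      = (α * β) * ((1 - α) * (1 - β) * (1 + s) ^ 2) := by ring
    _ ≤ (α * β) * ((1 - α * β) ^ 2) := by
        exact mul_le_mul_of_nonneg_left h2 ht
    _ ≤ (α * β) * ((1 + (p1 - 1) * α * β) * (1 + (p2 - 1) * α * β)) :=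
        mul_le_mul_of_nonneg_left h3 ht

theorem stmt10 (p1 p2 : ℝ) (hp1 : 0 < p1) (hp2 : 0 < p2)
    (q : ℝ × ℝ) (hq : q ∈ Set.Icc (0 : ℝ) 1 ×ˢ Set.Icc (0 : ℝ) 1) :
    Filter.Tendsto (fun m => ((V p1 p2)^[m] q).1 * ((V p1 p2)^[m] q).2)
      Filter.atTop (nhds 0) := by
  have hbox : ∀ m : ℕ, (V p1 p2)^[m] q ∈ Set.Icc (0 : ℝ) 1 ×ˢ Set.Icc (0 : ℝ) 1 := by
    intro m
    induction m with
    | zero => simpa using hq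
    | succ n ih =>
        rw [Function.iterate_succ_apply']
        exact mem_box p1 p2 hp1 hp2 _ ih
  set t : ℕ → ℝ := fun m => ((V p1 p2)^[m] q).1 * ((V p1 p2)^[m] q).2 with htdef
  have hnonneg : ∀ m, 0 ≤ t m := fun m =>
    mul_nonneg (hbox m).1.1 (hbox m).2.1
  have hle1 : ∀ m, t m ≤ 1 := fun m =>
    mul_le_one₀ (hbox m).1.2 (hbox m).2.1 (hbox m).2.2
  have hstep : ∀ m, t (m + 1) * (1 + Real.sqrt (t m)) ^ 2 ≤ t m := by
    intro m
    have := key p1 p2 hp1 hp2 _ (hbox m)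
    simpa [htdef, Function.iterate_succ_apply'] using this
  have hmain : ∀ m : ℕ, t (m + 1) ≤ 1 / ((m : ℝ) + 1) := by
    intro m
    induction m with
    | zero =>
        simpa using hle1 1
    | succ n ih =>
        set u := t (n + 1) with hu
        set s := Real.sqrt u with hsdef
        have hs2 : s ^ 2 = u := Real.sq_sqrt (hnonneg _)
        have hs0 : 0 ≤ s := Real.sqrt_nonneg _
        have hv : 0 ≤ t (n + 2) := hnonneg _
        have hst := hstep (n + 1)
        rw [← hu, ← hsdef] at hst
        have hn2 : (0 : ℝ) < (n : ℝ) + 1 + 1 := by positivity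
        push_cast
        rw [le_div_iff₀ hn2]
        by_cases hc : u ≤ 1 / ((n : ℝ) + 2)
        · have hc' : u * ((n : ℝ) + 2) ≤ 1 := by
            rw [← le_div_iff₀ (by positivity)]; exact hc
          nlinarith [mul_nonneg hv hs0, mul_nonneg (mul_nonneg hv hs0) hs0,
            mul_nonneg hv (Nat.cast_nonneg n : (0:ℝ) ≤ n)]
        · push_neg at hc
          have hc' : 1 < u * ((n : ℝ) + 2) := by
            rw [← div_lt_iff₀ (by positivity)]; exact hc
          have ih' : u * ((n : ℝ) + 1) ≤ 1 := by
            rw [← le_div_iff₀ (by positivity)]; exact ih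
          have hs1 : s ≤ 1 := by
            nlinarith [hle1 (n + 1)]
          -- (n+2) ≤ (n+1)(1+s)^2
          have hkey : (n : ℝ) + 2 ≤ ((n : ℝ) + 1) * (1 + s) ^ 2 := by
            nlinarith [mul_nonneg (Nat.cast_nonneg n : (0:ℝ) ≤ n) hs0,
              mul_nonneg (Nat.cast_nonneg n : (0:ℝ) ≤ n) (sq_nonneg s)]
          calc t (n + 2) * ((n : ℝ) + 1 + 1)
              ≤ t (n + 2) * (((n : ℝ) + 1) * (1 + s) ^ 2) := by
                have : (n : ℝ) + 1 + 1 = (n : ℝ) + 2 := by ring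
                rw [this]
                exact mul_le_mul_of_nonneg_left hkey hv
            _ = (t (n + 2) * (1 + s) ^ 2) * ((n : ℝ) + 1) := by ring
            _ ≤ u * ((n : ℝ) + 1) := by
                exact mul_le_mul_of_nonneg_right hst (by positivity)
            _ ≤ 1 := ih'
  have hg : Filter.Tendsto (fun m : ℕ => 1 / (m : ℝ)) Filter.atTop (nhds 0) :=
    tendsto_one_div_atTop_nhds_zero_nat
  refine squeeze_zero' ?_ ?_ hg
  · exact Filter.Eventually.of_forall hnonneg
  · filter_upwards [Filter.eventually_ge_atTop 1] with m hm
    obtain ⟨k, rfl⟩ := Nat.exists_eq_add_of_le hm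
    have := hmain k
    have heq : (1 : ℕ) + k = k + 1 := by ring
    rw [heq]
    convert this using 2
    push_cast
    ring
end

section
/- For any initial point in [0,1]², the iterates V^m converge to a fixed point of V, i.e., to a point on one of the coordinate axes. -/
lemma denom_pos (p t : ℝ) (hp : 0 < p) (ht0 : 0 ≤ t) (ht1 : t ≤ 1) :
    0 < 1 + (p - 1) * t := by
  rcases le_or_gt p 1 with h | h
  · nlinarith [mul_nonneg (by linarith : (0:ℝ) ≤ 1 - p) (by linarith : (0:ℝ) ≤ 1 - t)]
  · nlinarith [mul_nonneg (by linarith : (0:ℝ) ≤ p - 1) ht0]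

lemma V_step (p1 p2 : ℝ) (hp1 : 0 < p1) (hp2 : 0 < p2) {q : ℝ × ℝ}
    (hq : q ∈ Set.Icc (0:ℝ) 1 ×ˢ Set.Icc (0:ℝ) 1) :
    V p1 p2 q ∈ Set.Icc (0:ℝ) 1 ×ˢ Set.Icc (0:ℝ) 1 ∧
      (V p1 p2 q).1 ≤ q.1 ∧ (V p1 p2 q).2 ≤ q.2 := by
  obtain ⟨⟨ha0, ha1⟩, hb0, hb1⟩ := hq
  have htt0 : 0 ≤ q.1 * q.2 := mul_nonneg ha0 hb0
  have htt1 : q.1 * q.2 ≤ 1 := mul_le_one₀ ha1 hb0 hb1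
  have hD1 : 0 < 1 + (p1 - 1) * q.1 * q.2 := by
    rw [mul_assoc]; exact denom_pos p1 _ hp1 htt0 htt1
  have hD2 : 0 < 1 + (p2 - 1) * q.1 * q.2 := by
    rw [mul_assoc]; exact denom_pos p2 _ hp2 htt0 htt1
  have h1le : (V p1 p2 q).1 ≤ q.1 := by
    show q.1 * (1 - q.2) / (1 + (p1 - 1) * q.1 * q.2) ≤ q.1
    rw [div_le_iff₀ hD1]
    nlinarith [mul_nonneg (mul_nonneg ha0 hb0) (denom_pos p1 q.1 hp1 ha0 ha1).le]
  have h2le : (V p1 p2 q).2 ≤ q.2 := by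
    show q.2 * (1 - q.1) / (1 + (p2 - 1) * q.1 * q.2) ≤ q.2
    rw [div_le_iff₀ hD2]
    nlinarith [mul_nonneg (mul_nonneg ha0 hb0) (denom_pos p2 q.2 hp2 hb0 hb1).le]
  have h1nn : 0 ≤ (V p1 p2 q).1 := div_nonneg (by nlinarith) hD1.le
  have h2nn : 0 ≤ (V p1 p2 q).2 := div_nonneg (by nlinarith) hD2.le
  exact ⟨⟨⟨h1nn, h1le.trans ha1⟩, h2nn, h2le.trans hb1⟩, h1le, h2le⟩

theorem stmt11 (p1 p2 : ℝ) (hp1 : 0 < p1) (hp2 : 0 < p2)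
    (q : ℝ × ℝ) (hq : q ∈ Set.Icc (0 : ℝ) 1 ×ˢ Set.Icc (0 : ℝ) 1) :
    ∃ l : ℝ × ℝ, Filter.Tendsto (fun m => (V p1 p2)^[m] q) Filter.atTop (nhds l) ∧
      V p1 p2 l = l ∧ l.1 * l.2 = 0 := by
  set f : ℕ → ℝ × ℝ := fun m => (V p1 p2)^[m] q with hf
  have hbox : ∀ m, f m ∈ Set.Icc (0:ℝ) 1 ×ˢ Set.Icc (0:ℝ) 1 := by
    intro m
    induction m with
    | zero => exact hq
    | succ n ih =>
      have : f (n+1) = V p1 p2 (f n) := Function.iterate_succ_apply' _ _ _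
      rw [this]; exact (V_step p1 p2 hp1 hp2 ih).1
  have hstep : ∀ n, f (n+1) = V p1 p2 (f n) := fun n => Function.iterate_succ_apply' _ _ _
  have hanti1 : Antitone (fun m => (f m).1) := by
    apply antitone_nat_of_succ_le
    intro n
    rw [hstep n]
    exact (V_step p1 p2 hp1 hp2 (hbox n)).2.1
  have hanti2 : Antitone (fun m => (f m).2) := by
    apply antitone_nat_of_succ_le
    intro n
    rw [hstep n]
    exact (V_step p1 p2 hp1 hp2 (hbox n)).2.2
  have hbdd1 : BddBelow (Set.range fun m => (f m).1) :=
    ⟨0, by rintro x ⟨m, rfl⟩; exact (hbox m).1.1⟩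
  have hbdd2 : BddBelow (Set.range fun m => (f m).2) :=
    ⟨0, by rintro x ⟨m, rfl⟩; exact (hbox m).2.1⟩
  have ht1 := tendsto_atTop_ciInf hanti1 hbdd1
  have ht2 := tendsto_atTop_ciInf hanti2 hbdd2
  set a : ℝ := ⨅ m, (f m).1 with hadef
  set b : ℝ := ⨅ m, (f m).2 with hbdef
  set l : ℝ × ℝ := (a, b) with hl
  have hlim : Filter.Tendsto f Filter.atTop (nhds l) := by
    have := ht1.prodMk_nhds ht2
    simpa using this
  have ha0 : 0 ≤ a := ge_of_tendsto' ht1 (fun m => (hbox m).1.1)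
  have ha1 : a ≤ 1 := le_of_tendsto' ht1 (fun m => (hbox m).1.2)
  have hb0 : 0 ≤ b := ge_of_tendsto' ht2 (fun m => (hbox m).2.1)
  have hb1 : b ≤ 1 := le_of_tendsto' ht2 (fun m => (hbox m).2.2)
  have hD1 : (0:ℝ) < 1 + (p1 - 1) * a * b := by
    rw [mul_assoc]
    exact denom_pos p1 _ hp1 (mul_nonneg ha0 hb0) (mul_le_one₀ ha1 hb0 hb1)
  have hD2 : (0:ℝ) < 1 + (p2 - 1) * a * b := by
    rw [mul_assoc]
    exact denom_pos p2 _ hp2 (mul_nonneg ha0 hb0) (mul_le_one₀ ha1 hb0 hb1)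
  have hcont : ContinuousAt (V p1 p2) l := by
    apply ContinuousAt.prodMk
    · exact ContinuousAt.div (continuousAt_fst.mul (continuousAt_const.sub continuousAt_snd))
        (continuousAt_const.add ((continuousAt_const.mul continuousAt_fst).mul continuousAt_snd))
        hD1.ne'
    · exact ContinuousAt.div (continuousAt_snd.mul (continuousAt_const.sub continuousAt_fst))
        (continuousAt_const.add ((continuousAt_const.mul continuousAt_fst).mul continuousAt_snd))
        hD2.ne'
  have hshift : Filter.Tendsto (fun m => f (m+1)) Filter.atTop (nhds l) :=
    hlim.comp (Filter.tendsto_add_atTop_nat 1)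
  have hshift' : Filter.Tendsto (fun m => f (m+1)) Filter.atTop (nhds (V p1 p2 l)) := by
    have := (hcont.tendsto).comp hlim
    simpa [Function.comp_def, hstep] using this
  have hfix : V p1 p2 l = l := tendsto_nhds_unique hshift' hshift
  refine ⟨l, hlim, hfix, ?_⟩
  have h1 : a * (1 - b) / (1 + (p1 - 1) * a * b) = a := congrArg Prod.fst hfix
  have h1' : a * (1 - b) = a * (1 + (p1 - 1) * a * b) := by
    rw [div_eq_iff hD1.ne'] at h1
    linarith [h1]
  have hkey : a * b * (1 + (p1 - 1) * a) = 0 := by linear_combination -h1'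
  have hpos : (0:ℝ) < 1 + (p1 - 1) * a := denom_pos p1 a hp1 ha0 ha1
  show a * b = 0
  rcases mul_eq_zero.mp hkey with h | h
  · exact h
  · linarith
end

section
/- For any initial point (x,y,u,v) ∈ S^{2,2}, the sequence W^m(x,y,u,v) = (x^(m),y^(m),u^(m),v^(m)) converges, and lim_{m→∞} x^(m)·v^(m) = 0. -/
/-- Auxiliary: the image of W in terms of the ratios. -/
noncomputable def Faux (a b s1 s2 al be : ℝ) : ℝ × ℝ × ℝ × ℝ :=
  (a*al*be,
   s1*al*(1-be)+a*(1-al)*be+a*(1-al)*(1-be),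
   s2*al*(1-be)+b*al*be+b*(1-al)*be,
   b*(1-al)*(1-be))

lemma convex_pos {a c t : ℝ} (ha : 0 < a) (hc : 0 < c) (h0 : 0 ≤ t) (h1 : t ≤ 1) :
    0 < a * t + c * (1 - t) := by
  rcases h0.lt_or_eq with h | h
  · nlinarith [mul_pos ha h, mul_nonneg hc.le (sub_nonneg.2 h1)]
  · rw [← h]; simpa using hc

lemma denxy_pos {a s1 al be : ℝ} (ha : 0 < a) (hs1 : 0 < s1)
    (hal0 : 0 ≤ al) (hal1 : al ≤ 1) (hbe0 : 0 ≤ be) (hbe1 : be ≤ 1) :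
    0 < a*al*be + (s1*al*(1-be) + a*(1-al)*be + a*(1-al)*(1-be)) := by
  have hc : 0 < s1*al + a*(1-al) := convex_pos hs1 ha hal0 hal1
  have h2 := convex_pos ha hc hbe0 hbe1
  nlinarith [h2]

lemma denuv_pos {b s2 al be : ℝ} (hb : 0 < b) (hs2 : 0 < s2)
    (hal0 : 0 ≤ al) (hal1 : al ≤ 1) (hbe0 : 0 ≤ be) (hbe1 : be ≤ 1) :
    0 < (s2*al*(1-be)+b*al*be+b*(1-al)*be) + b*(1-al)*(1-be) := by
  have hc : 0 < s2*al + b*(1-al) := convex_pos hs2 hb hal0 hal1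
  have h2 := convex_pos hb hc hbe0 hbe1
  nlinarith [h2]

lemma step_le {a s1 al be : ℝ} (ha : 0 < a) (hs1 : 0 < s1)
    (hal0 : 0 ≤ al) (hal1 : al ≤ 1) (hbe0 : 0 ≤ be) (hbe1 : be ≤ 1) :
    a*al*be / (a*al*be + (s1*al*(1-be) + a*(1-al)*be + a*(1-al)*(1-be))) ≤ al := by
  have hD := denxy_pos ha hs1 hal0 hal1 hbe0 hbe1
  rw [div_le_iff₀ hD]
  nlinarith [mul_nonneg (mul_nonneg (mul_nonneg hs1.le hal0) hal0) (sub_nonneg.2 hbe1),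
             mul_nonneg (mul_nonneg (mul_nonneg ha.le hal0) (sub_nonneg.2 hal1)) (sub_nonneg.2 hbe1)]

lemma step_ge {b s2 al be : ℝ} (hb : 0 < b) (hs2 : 0 < s2)
    (hal0 : 0 ≤ al) (hal1 : al ≤ 1) (hbe0 : 0 ≤ be) (hbe1 : be ≤ 1) :
    be ≤ (s2*al*(1-be)+b*al*be+b*(1-al)*be) /
      ((s2*al*(1-be)+b*al*be+b*(1-al)*be) + b*(1-al)*(1-be)) := by
  have hD := denuv_pos hb hs2 hal0 hal1 hbe0 hbe1
  rw [le_div_iff₀ hD]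
  nlinarith [mul_nonneg (mul_nonneg (mul_nonneg hs2.le hal0) (sub_nonneg.2 hbe1)) (sub_nonneg.2 hbe1),
             mul_nonneg (mul_nonneg (mul_nonneg hb.le hal0) hbe0) (sub_nonneg.2 hbe1)]

lemma sumxy_pos {p : ℝ × ℝ × ℝ × ℝ} (hp : p ∈ S22) : 0 < p.1 + p.2.1 := by
  obtain ⟨h1, h2, -, -, -, h6, -⟩ := hp
  rcases h1.lt_or_eq with h | h
  · linarith
  rcases h2.lt_or_eq with h' | h'
  · linarith
  exact absurd (by rw [← h, ← h']) h6

lemma sumuv_pos {p : ℝ × ℝ × ℝ × ℝ} (hp : p ∈ S22) : 0 < p.2.2.1 + p.2.2.2 := by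
  obtain ⟨-, -, h3, h4, -, -, h7⟩ := hp
  rcases h3.lt_or_eq with h | h
  · linarith
  rcases h4.lt_or_eq with h' | h'
  · linarith
  exact absurd (by rw [← h, ← h']) h7

lemma Faux_mem {a b s1 s2 al be : ℝ} (ha : 0 < a) (hb : 0 < b) (hs1 : 0 < s1) (hs2 : 0 < s2)
    (hab : a + b = 1) (hs : s1 + s2 = 1)
    (hal0 : 0 ≤ al) (hal1 : al ≤ 1) (hbe0 : 0 ≤ be) (hbe1 : be ≤ 1) :
    Faux a b s1 s2 al be ∈ S22 := by
  have k1 : 0 ≤ 1 - al := by linarith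
  have k2 : 0 ≤ 1 - be := by linarith
  have hxy := denxy_pos ha hs1 hal0 hal1 hbe0 hbe1
  have huv := denuv_pos hb hs2 hal0 hal1 hbe0 hbe1
  have t2 := mul_nonneg (mul_nonneg hs1.le hal0) k2
  have t3 := mul_nonneg (mul_nonneg ha.le k1) hbe0
  have t4 := mul_nonneg (mul_nonneg ha.le k1) k2
  have t5 := mul_nonneg (mul_nonneg hs2.le hal0) k2
  have t6 := mul_nonneg (mul_nonneg hb.le hal0) hbe0
  have t7 := mul_nonneg (mul_nonneg hb.le k1) hbe0
  simp only [S22, Faux, Set.mem_setOf_eq]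
  refine ⟨mul_nonneg (mul_nonneg ha.le hal0) hbe0, by linarith, by linarith,
    mul_nonneg (mul_nonneg hb.le k1) k2, ?_, ?_, ?_⟩
  · linear_combination (al*be + (1-al)*be + (1-al)*(1-be)) * hab + (al*(1-be)) * hs
  · intro hcon
    rw [Prod.mk.injEq] at hcon
    linarith [hcon.1, hcon.2]
  · intro hcon
    rw [Prod.mk.injEq] at hcon
    linarith [hcon.1, hcon.2]

lemma W_eq_Faux (a b s1 s2 : ℝ) {p : ℝ × ℝ × ℝ × ℝ}
    (h1 : p.1 + p.2.1 ≠ 0) (h2 : p.2.2.1 + p.2.2.2 ≠ 0) :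
    W a b s1 s2 p =
      Faux a b s1 s2 (p.1 / (p.1 + p.2.1)) (p.2.2.1 / (p.2.2.1 + p.2.2.2)) := by
  obtain ⟨x, y, u, v⟩ := p
  simp only at h1 h2
  simp only [W, Faux, Prod.mk.injEq]
  refine ⟨?_, ?_, ?_, ?_⟩ <;> · field_simp; try ring

theorem stmt12 (a b s1 s2 : ℝ) (ha : 0 < a) (hb : 0 < b) (hs1 : 0 < s1) (hs2 : 0 < s2)
    (hab : a + b = 1) (hs : s1 + s2 = 1)
    (p : ℝ × ℝ × ℝ × ℝ) (hp : p ∈ S22) :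
    (∃ l : ℝ × ℝ × ℝ × ℝ,
      Filter.Tendsto (fun m => (W a b s1 s2)^[m] p) Filter.atTop (nhds l)) ∧
    Filter.Tendsto (fun m => ((W a b s1 s2)^[m] p).1 * ((W a b s1 s2)^[m] p).2.2.2)
      Filter.atTop (nhds 0) := by
  set q : ℕ → ℝ × ℝ × ℝ × ℝ := fun m => (W a b s1 s2)^[m] p with hqdef
  have hqsucc : ∀ n, q (n + 1) = W a b s1 s2 (q n) := fun n =>
    Function.iterate_succ_apply' (W a b s1 s2) n p
  -- membership
  have hmem : ∀ m, q m ∈ S22 := by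
    intro m
    induction m with
    | zero => simpa [hqdef] using hp
    | succ n ih =>
      rw [hqsucc n, W_eq_Faux a b s1 s2 (sumxy_pos ih).ne' (sumuv_pos ih).ne']
      exact Faux_mem ha hb hs1 hs2 hab hs
        (div_nonneg ih.1 (sumxy_pos ih).le)
        ((div_le_one (sumxy_pos ih)).2 (by linarith [ih.2.1]))
        (div_nonneg ih.2.2.1 (sumuv_pos ih).le)
        ((div_le_one (sumuv_pos ih)).2 (by linarith [ih.2.2.2.1]))
  set A : ℕ → ℝ := fun m => (q m).1 / ((q m).1 + (q m).2.1) with hAdef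
  set B : ℕ → ℝ := fun m => (q m).2.2.1 / ((q m).2.2.1 + (q m).2.2.2) with hBdef
  have hA0 : ∀ m, 0 ≤ A m ∧ A m ≤ 1 := fun m =>
    ⟨div_nonneg (hmem m).1 (sumxy_pos (hmem m)).le,
     (div_le_one (sumxy_pos (hmem m))).2 (by linarith [(hmem m).2.1])⟩
  have hB0 : ∀ m, 0 ≤ B m ∧ B m ≤ 1 := fun m =>
    ⟨div_nonneg (hmem m).2.2.1 (sumuv_pos (hmem m)).le,
     (div_le_one (sumuv_pos (hmem m))).2 (by linarith [(hmem m).2.2.2.1])⟩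
  have hrec : ∀ m, q (m + 1) = Faux a b s1 s2 (A m) (B m) := by
    intro m
    rw [hqsucc m]
    exact W_eq_Faux a b s1 s2 (sumxy_pos (hmem m)).ne' (sumuv_pos (hmem m)).ne'
  -- monotonicity of the ratios
  have hAstep : ∀ m, A (m + 1) ≤ A m := fun m => by
    have h1 : A (m + 1) = a*A m*B m /
        (a*A m*B m + (s1*A m*(1-B m) + a*(1-A m)*B m + a*(1-A m)*(1-B m))) := by
      show (q (m+1)).1 / ((q (m+1)).1 + (q (m+1)).2.1) = _
      rw [hrec m]
      rfl
    rw [h1]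
    exact step_le ha hs1 (hA0 m).1 (hA0 m).2 (hB0 m).1 (hB0 m).2
  have hBstep : ∀ m, B m ≤ B (m + 1) := fun m => by
    have h1 : B (m + 1) = (s2*A m*(1-B m)+b*A m*B m+b*(1-A m)*B m) /
        ((s2*A m*(1-B m)+b*A m*B m+b*(1-A m)*B m) + b*(1-A m)*(1-B m)) := by
      show (q (m+1)).2.2.1 / ((q (m+1)).2.2.1 + (q (m+1)).2.2.2) = _
      rw [hrec m]
      rfl
    rw [h1]
    exact step_ge hb hs2 (hA0 m).1 (hA0 m).2 (hB0 m).1 (hB0 m).2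
  have hAanti : Antitone A := antitone_nat_of_succ_le hAstep
  have hBmono : Monotone B := monotone_nat_of_le_succ hBstep
  have hAbdd : BddBelow (Set.range A) := ⟨0, by rintro _ ⟨m, rfl⟩; exact (hA0 m).1⟩
  have hBbdd : BddAbove (Set.range B) := ⟨1, by rintro _ ⟨m, rfl⟩; exact (hB0 m).2⟩
  set la := ⨅ m, A m with hladef
  set lb := ⨆ m, B m with hlbdef
  have hAlim : Filter.Tendsto A Filter.atTop (nhds la) := tendsto_atTop_ciInf hAanti hAbdd
  have hBlim : Filter.Tendsto B Filter.atTop (nhds lb) := tendsto_atTop_ciSup hBmono hBbdd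
  have hla0 : 0 ≤ la := le_ciInf fun m => (hA0 m).1
  have hla1 : la ≤ 1 := le_trans (ciInf_le hAbdd 0) (hA0 0).2
  have hlb0 : 0 ≤ lb := le_trans (hB0 0).1 (le_ciSup hBbdd 0)
  have hlb1 : lb ≤ 1 := ciSup_le fun m => (hB0 m).2
  -- componentwise limits of q (m+1)
  have e1 : ∀ m, (q (m+1)).1 = a * A m * B m := fun m => by rw [hrec m]; rfl
  have e2 : ∀ m, (q (m+1)).2.1 = s1*A m*(1-B m)+a*(1-A m)*B m+a*(1-A m)*(1-B m) :=
    fun m => by rw [hrec m]; rfl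
  have e3 : ∀ m, (q (m+1)).2.2.1 = s2*A m*(1-B m)+b*A m*B m+b*(1-A m)*B m :=
    fun m => by rw [hrec m]; rfl
  have e4 : ∀ m, (q (m+1)).2.2.2 = b*(1-A m)*(1-B m) := fun m => by rw [hrec m]; rfl
  have cB : Filter.Tendsto (fun m => 1 - B m) Filter.atTop (nhds (1 - lb)) :=
    tendsto_const_nhds.sub hBlim
  have cA : Filter.Tendsto (fun m => 1 - A m) Filter.atTop (nhds (1 - la)) :=
    tendsto_const_nhds.sub hAlim
  have l1 : Filter.Tendsto (fun m => (q (m+1)).1) Filter.atTop (nhds (a*la*lb)) := by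
    simp only [e1]
    exact (tendsto_const_nhds.mul hAlim).mul hBlim
  have l2 : Filter.Tendsto (fun m => (q (m+1)).2.1) Filter.atTop
      (nhds (s1*la*(1-lb)+a*(1-la)*lb+a*(1-la)*(1-lb))) := by
    simp only [e2]
    exact (((tendsto_const_nhds.mul hAlim).mul cB).add
      ((tendsto_const_nhds.mul cA).mul hBlim)).add ((tendsto_const_nhds.mul cA).mul cB)
  have l3 : Filter.Tendsto (fun m => (q (m+1)).2.2.1) Filter.atTop
      (nhds (s2*la*(1-lb)+b*la*lb+b*(1-la)*lb)) := by
    simp only [e3]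
    exact (((tendsto_const_nhds.mul hAlim).mul cB).add
      ((tendsto_const_nhds.mul hAlim).mul hBlim)).add ((tendsto_const_nhds.mul cA).mul hBlim)
  have l4 : Filter.Tendsto (fun m => (q (m+1)).2.2.2) Filter.atTop
      (nhds (b*(1-la)*(1-lb))) := by
    simp only [e4]
    exact (tendsto_const_nhds.mul cA).mul cB
  -- the fixed-point equation
  have hAshift : Filter.Tendsto (fun m => A (m + 1)) Filter.atTop (nhds la) :=
    hAlim.comp (Filter.tendsto_add_atTop_nat 1)
  have heq : ∀ m, A (m+1) * ((q (m+1)).1 + (q (m+1)).2.1) = (q (m+1)).1 := fun m =>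
    div_mul_cancel₀ _ (sumxy_pos (hmem (m+1))).ne'
  have hEq : la * (a*la*lb + (s1*la*(1-lb)+a*(1-la)*lb+a*(1-la)*(1-lb))) = a*la*lb := by
    refine tendsto_nhds_unique (Filter.Tendsto.congr (fun m => heq m) ?_) l1
    exact hAshift.mul (l1.add l2)
  have hkey : la * (1 - lb) = 0 := by
    have hc : 0 < s1*la + a*(1-la) := convex_pos hs1 ha hla0 hla1
    have h2 : la * (1-lb) * (s1*la + a*(1-la)) = 0 := by linear_combination hEq
    rcases mul_eq_zero.1 h2 with h | h
    · exact h
    · exact absurd h hc.ne'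
  constructor
  · refine ⟨(a*la*lb, s1*la*(1-lb)+a*(1-la)*lb+a*(1-la)*(1-lb),
      s2*la*(1-lb)+b*la*lb+b*(1-la)*lb, b*(1-la)*(1-lb)), ?_⟩
    have hshift : Filter.Tendsto (fun m => q (m + 1)) Filter.atTop
        (nhds (a*la*lb, s1*la*(1-lb)+a*(1-la)*lb+a*(1-la)*(1-lb),
          s2*la*(1-lb)+b*la*lb+b*(1-la)*lb, b*(1-la)*(1-lb))) := by
      have : ∀ m, q (m+1) = ((q (m+1)).1, (q (m+1)).2.1, (q (m+1)).2.2.1, (q (m+1)).2.2.2) :=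
        fun m => rfl
      refine Filter.Tendsto.congr (fun m => (this m).symm) ?_
      exact l1.prodMk_nhds (l2.prodMk_nhds (l3.prodMk_nhds l4))
    exact (Filter.tendsto_add_atTop_iff_nat 1).1 hshift
  · have hz : a*la*lb * (b*(1-la)*(1-lb)) = 0 := by
      linear_combination (a*lb*b*(1-la)) * hkey
    have hprod : Filter.Tendsto (fun m => (q (m+1)).1 * (q (m+1)).2.2.2)
        Filter.atTop (nhds 0) := by
      have := l1.mul l4
      rwa [hz] at this
    exact (Filter.tendsto_add_atTop_iff_nat 1).1 hprod
end

section
/- If f ∈ C^∞[0,1] is analytic with f(α) = Σ c_k α^k, is not identically zero, and satisfies f(α)(α - f(α))(1-α) = α(f(α) - f(f(α))) for all α ∈ [0,1] (with f mapping [0,1] into itself so f∘f is defined), then f(α) = α or f(α) = θα - α² for some constant θ. -/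
open Filter FormalMultilinearSeries Set
noncomputable def sumF (d : ℕ → ℝ) : ℝ → ℝ := fun x => ∑' k, d k * x ^ k

lemma summable_pow {d : ℕ → ℝ} (hd : Summable d) {x : ℝ} (hx : |x| ≤ 1) :
    Summable (fun k => d k * x ^ k) := by
  refine Summable.of_norm_bounded hd.abs (fun k => ?_)
  rw [norm_mul, norm_pow]
  calc ‖d k‖ * ‖x‖ ^ k ≤ ‖d k‖ * 1 ^ k := by
        gcongr; exact hx
    _ = |d k| := by simp

lemma hasF {d : ℕ → ℝ} (hd : Summable d) :
    HasFPowerSeriesOnBall (sumF d) (ofScalars ℝ d) 0 1 := by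
  constructor
  · apply le_radius_of_summable_norm
    simp only [ofScalars_norm, NNReal.coe_one, one_pow, mul_one, Real.norm_eq_abs]
    exact hd.abs
  · exact one_pos
  · intro y hy
    rw [mem_emetric_ball_zero_iff] at hy
    have hy1 : |y| ≤ 1 := by
      have := hy.le
      simpa [← NNReal.coe_le_coe, Real.norm_eq_abs] using (ENNReal.coe_le_one_iff.mp this)
    have := (summable_pow hd hy1).hasSum
    simp only [ofScalars_apply_eq, smul_eq_mul, zero_add]
    exact this

lemma sumF_anal {d : ℕ → ℝ} (hd : Summable d) {x : ℝ} (hx : |x| < 1) :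
    AnalyticAt ℝ (sumF d) x := by
  refine (hasF hd).analyticAt_of_mem ?_
  rw [mem_emetric_ball_zero_iff]
  have h' : ‖x‖₊ < 1 := by rw [← NNReal.coe_lt_coe]; simpa [Real.norm_eq_abs] using hx
  exact ENNReal.coe_lt_one_iff.mpr h'

lemma sumF_zero_coeff {d : ℕ → ℝ} (hd : Summable d) (h : sumF d =ᶠ[nhds 0] 0) :
    ∀ k, d k = 0 := by
  have h1 : HasFPowerSeriesAt (sumF d) (ofScalars ℝ d) 0 := (hasF hd).hasFPowerSeriesAt
  have h2 : HasFPowerSeriesAt 0 (ofScalars ℝ d) 0 := h1.congr h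
  have := h2.eq_zero
  intro k
  exact (ofScalars_eq_zero ℝ k).mp (congrFun this k)

lemma sumF_at_zero (d : ℕ → ℝ) : sumF d 0 = d 0 := by
  unfold sumF
  rw [tsum_eq_single 0 (fun b hb => by simp [zero_pow hb])]
  simp

theorem stmt15 (f : ℝ → ℝ) (c : ℕ → ℝ)
    (hsum : ∀ α ∈ Set.Icc (0 : ℝ) 1, HasSum (fun k => c k * α ^ k) (f α))
    (hmaps : Set.MapsTo f (Set.Icc (0 : ℝ) 1) (Set.Icc (0 : ℝ) 1))
    (hne : ∃ α ∈ Set.Icc (0 : ℝ) 1, f α ≠ 0)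
    (heq : ∀ α ∈ Set.Icc (0 : ℝ) 1,
      f α * (α - f α) * (1 - α) = α * (f α - f (f α))) :
    (∀ α ∈ Set.Icc (0 : ℝ) 1, f α = α) ∨
    ∃ θ : ℝ, ∀ α ∈ Set.Icc (0 : ℝ) 1, f α = θ * α - α ^ 2 := by
  have h01 : (0:ℝ) ∈ Set.Icc (0:ℝ) 1 := ⟨le_refl 0, zero_le_one⟩
  have h11 : (1:ℝ) ∈ Set.Icc (0:ℝ) 1 := ⟨zero_le_one, le_refl 1⟩
  have cs : Summable c := by simpa using (hsum 1 h11).summable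
  have cs1 : Summable (fun k => c (k+1)) := by
    rwa [summable_nat_add_iff 1]
  have hf0 : f 0 = 0 := by
    have h := heq 0 h01
    have h2 : f 0 * f 0 = 0 := by linear_combination -h
    exact mul_self_eq_zero.mp h2
  have hc0 : c 0 = 0 := by
    have hs0 := hsum 0 h01
    have hfun : (fun k : ℕ => c k * (0:ℝ)^k) = fun k => if k = 0 then c 0 else 0 := by
      funext k
      cases k with
      | zero => simp
      | succ n => simp
    rw [hfun] at hs0
    have := (hasSum_ite_eq 0 (c 0)).unique hs0
    rw [this, hf0]
  set U : ℝ → ℝ := sumF (fun k => c (k+1)) with hU_def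
  have hUsum : ∀ x : ℝ, |x| ≤ 1 → HasSum (fun k => c (k+1) * x^k) (U x) :=
    fun x hx => (summable_pow cs1 hx).hasSum
  have hfU : ∀ α ∈ Set.Icc (0:ℝ) 1, f α = α * U α := by
    intro α hα
    have hαabs : |α| ≤ 1 := abs_le.mpr ⟨by linarith [hα.1], hα.2⟩
    have h1 := (hUsum α hαabs).mul_left α
    have h2 : (fun k => α * (c (k+1) * α^k)) = fun k => c (k+1) * α^(k+1) := by
      funext k; ring
    rw [h2] at h1
    have h3 := (hasSum_nat_add_iff (f := fun n => c n * α ^ n) 1).mp h1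
    simp only [Finset.range_one, Finset.sum_singleton, hc0, zero_mul, add_zero] at h3
    exact (hsum α hα).unique h3
  have hU0 : U 0 = c 1 := sumF_at_zero _
  have hUanalAt : ∀ x : ℝ, |x| < 1 → AnalyticAt ℝ U x := fun x hx => sumF_anal cs1 hx
  have hUat0 : AnalyticAt ℝ U 0 := hUanalAt 0 (by norm_num)
  have hθ : 0 ≤ c 1 := by
    have htd : Tendsto U (nhdsWithin 0 (Set.Ioi 0)) (nhds (c 1)) := by
      rw [← hU0]
      exact (hUat0.continuousAt.continuousWithinAt).tendsto
    refine ge_of_tendsto htd ?_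
    filter_upwards [Ioo_mem_nhdsGT_of_mem (⟨le_refl 0, zero_lt_one⟩ : (0:ℝ) ∈ Set.Ico 0 1)]
      with x hx
    have hx01 : x ∈ Set.Icc (0:ℝ) 1 := ⟨hx.1.le, hx.2.le⟩
    have hfx := (hmaps hx01).1
    have hfe := hfU x hx01
    nlinarith [hx.1]
  rcases hUat0.eventually_eq_zero_or_eventually_ne_zero with hUz | hUne
  · exfalso
    have hUz' : sumF (fun k => c (k+1)) =ᶠ[nhds 0] 0 := by
      filter_upwards [hUz] with x hx
      simpa [hU_def] using hx
    have hck : ∀ k, c (k+1) = 0 := sumF_zero_coeff cs1 hUz'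
    obtain ⟨α, hα, hfα⟩ := hne
    apply hfα
    have hfun : (fun k : ℕ => c k * α ^ k) = fun _ => (0:ℝ) := by
      funext k
      cases k with
      | zero => simp [hc0]
      | succ n => simp [hck n]
    have h := hsum α hα
    rw [hfun] at h
    exact h.unique hasSum_zero
  set V : ℝ → ℝ := fun x => c 1 - x - U x with hV_def
  set Φ : ℝ → ℝ := fun x => x * U x with hΦ_def
  have hVanalAt : ∀ x : ℝ, |x| < 1 → AnalyticAt ℝ V x := by
    intro x hx
    exact (analyticAt_const.sub analyticAt_id).sub (hUanalAt x hx)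
  have hVat0 : AnalyticAt ℝ V 0 := hVanalAt 0 (by norm_num)
  have hΦanalAt : ∀ x : ℝ, |x| < 1 → AnalyticAt ℝ Φ x := by
    intro x hx
    exact analyticAt_id.mul (hUanalAt x hx)
  have hΦat0 : AnalyticAt ℝ Φ 0 := hΦanalAt 0 (by norm_num)
  have hΦ0 : Φ 0 = 0 := by simp [hΦ_def]
  have hΦtend : Tendsto Φ (nhds 0) (nhds 0) := by
    have := hΦat0.continuousAt.tendsto
    rwa [hΦ0] at this
  have hV0 : V 0 = 0 := by simp [hV_def, hU0]
  have hsmall : ∀ᶠ x in nhds (0:ℝ), |Φ x| < 1 := by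
    have h2 : ∀ᶠ y in nhds (0:ℝ), |y| < 1 := by
      filter_upwards [Metric.ball_mem_nhds (0:ℝ) one_pos] with y hy
      simpa [Real.dist_eq] using hy
    exact hΦtend.eventually h2
  obtain ⟨ε, hεpos, hball⟩ := Metric.eventually_nhds_iff.mp hsmall
  set δ : ℝ := min ε 1 with hδ_def
  have hδpos : 0 < δ := lt_min hεpos one_pos
  have hmem1 : ∀ x ∈ Metric.ball (0:ℝ) δ, |x| < 1 := by
    intro x hx
    have := Metric.mem_ball.mp hx
    rw [Real.dist_eq, sub_zero] at this
    exact lt_of_lt_of_le this (min_le_right _ _)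
  have hmemΦ : ∀ x ∈ Metric.ball (0:ℝ) δ, |Φ x| < 1 := by
    intro x hx
    apply hball
    have := Metric.mem_ball.mp hx
    exact lt_of_lt_of_le this (min_le_left _ _)
  have hEq : Set.EqOn (fun x => V (Φ x)) V (Metric.ball (0:ℝ) δ) := by
    apply AnalyticOnNhd.eqOn_of_preconnected_of_frequently_eq
    · intro x hx
      exact (hVanalAt _ (hmemΦ x hx)).comp (hΦanalAt x (hmem1 x hx))
    · intro x hx
      exact hVanalAt x (hmem1 x hx)
    · exact (convex_ball (0:ℝ) δ).isPreconnected
    · exact Metric.mem_ball_self hδpos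
    · have hle : nhdsWithin (0:ℝ) (Set.Ioi 0) ≤ nhdsWithin (0:ℝ) {(0:ℝ)}ᶜ :=
        nhdsWithin_mono 0 (fun x hx => ne_of_gt hx)
      have hev : ∀ᶠ x in nhdsWithin (0:ℝ) (Set.Ioi 0), V (Φ x) = V x := by
        filter_upwards [Ioo_mem_nhdsGT_of_mem (⟨le_refl 0, zero_lt_one⟩ : (0:ℝ) ∈ Set.Ico 0 1),
          hUne.filter_mono hle] with x hx hUx
        have hx01 : x ∈ Set.Icc (0:ℝ) 1 := ⟨hx.1.le, hx.2.le⟩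
        have hfx : f x = x * U x := hfU x hx01
        have hfmem := hmaps hx01
        have hffx : f (f x) = f x * U (f x) := hfU _ hfmem
        have he := heq x hx01
        rw [hffx, hfx] at he
        have h2 : x^2 * U x * ((1 - U x) * (1 - x)) = x^2 * U x * (1 - U (x * U x)) := by
          linear_combination he
        have h3 := mul_left_cancel₀
          (mul_ne_zero (pow_ne_zero 2 (ne_of_gt hx.1)) hUx) h2
        show c 1 - Φ x - U (Φ x) = c 1 - x - U x
        show c 1 - x * U x - U (x * U x) = c 1 - x - U x
        linear_combination -h3
      exact (hev.frequently).filter_mono hle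
  have hInv : ∀ᶠ x in nhds (0:ℝ), V (Φ x) = V x :=
    Filter.eventually_of_mem (Metric.ball_mem_nhds 0 hδpos) (fun x hx => hEq hx)
  rcases hVat0.eventually_eq_zero_or_eventually_ne_zero with hVz | hVne
  · right
    refine ⟨c 1, ?_⟩
    set e : ℕ → ℝ := fun k => if k = 0 then c 1 else if k = 1 then -1 else 0 with he_def
    have hesum : Summable e := by
      apply summable_of_ne_finset_zero (s := {0, 1})
      intro b hb
      simp only [Finset.mem_insert, Finset.mem_singleton] at hb
      push_neg at hb
      simp [he_def, hb.1, hb.2]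
    have hdsum : Summable (fun k => c (k+1) - e k) := cs1.sub hesum
    have hdz : sumF (fun k => c (k+1) - e k) =ᶠ[nhds 0] 0 := by
      have habs : ∀ᶠ x in nhds (0:ℝ), |x| ≤ 1 := by
        filter_upwards [Metric.ball_mem_nhds (0:ℝ) one_pos] with y hy
        have := Metric.mem_ball.mp hy
        rw [Real.dist_eq, sub_zero] at this
        exact this.le
      filter_upwards [hVz, habs] with x hVx hx1
      have hE : HasSum (fun k => e k * x ^ k) (c 1 + -x) := by
        have hfun2 : (fun k : ℕ => e k * x ^ k)
            = fun k => (if k = 0 then c 1 else 0) + (if k = 1 then -x else 0) := by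
          funext k
          match k with
          | 0 => simp [he_def]
          | 1 => simp [he_def]
          | (n+2) => simp [he_def]
        rw [hfun2]
        exact (hasSum_ite_eq 0 (c 1)).add (hasSum_ite_eq 1 (-x))
      have hsub := (hUsum x hx1).sub hE
      have hfun3 : (fun k => c (k+1) * x^k - e k * x^k) = fun k => (c (k+1) - e k) * x^k := by
        funext k; ring
      rw [hfun3] at hsub
      have hts : sumF (fun k => c (k+1) - e k) x = U x - (c 1 + -x) := hsub.tsum_eq
      show sumF (fun k => c (k+1) - e k) x = 0
      rw [hts]
      have hVexp : c 1 - x - U x = 0 := hVx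
      linarith
    have hcoef := sumF_zero_coeff hdsum hdz
    have hc2 : c 2 = -1 := by
      have := hcoef 1
      simp [he_def] at this
      linarith
    have hc3 : ∀ k, c (k+3) = 0 := by
      intro k
      have := hcoef (k+2)
      simpa [he_def] using this
    intro α hα
    have hfun : (fun k : ℕ => c k * α ^ k)
        = fun k => (if k = 1 then c 1 * α else 0) + (if k = 2 then -α^2 else 0) := by
      funext k
      match k with
      | 0 => simp [hc0]
      | 1 => simp
      | 2 => rw [hc2]; norm_num
      | (n+3) => simp [hc3 n]
    have hS2 := (hasSum_ite_eq (1:ℕ) (c 1 * α)).add (hasSum_ite_eq (2:ℕ) (-α^2))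
    rw [← hfun] at hS2
    have := (hsum α hα).unique hS2
    rw [this]; ring
  · -- Case B: V not eventually zero
    have horder : analyticOrderAt V 0 ≠ ⊤ := by
      intro hcon
      have hcon2 : ∀ᶠ z in nhds (0:ℝ), V z = 0 := analyticOrderAt_eq_top.mp hcon
      have h1 : ∀ᶠ z in nhdsWithin (0:ℝ) {(0:ℝ)}ᶜ, V z = 0 := hcon2.filter_mono nhdsWithin_le_nhds
      rcases (hVne.and h1).exists with ⟨x, hx1, hx2⟩
      exact hx1 hx2
    obtain ⟨m, hm⟩ := WithTop.ne_top_iff_exists.mp horder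
    obtain ⟨g, hgat, hg0, hgfac⟩ := hVat0.analyticOrderAt_eq_natCast.mp hm.symm
    simp only [sub_zero, smul_eq_mul] at hgfac
    have hm1 : 1 ≤ m := by
      by_contra hcon
      have hm0 : m = 0 := by omega
      have := hgfac.self_of_nhds
      rw [hm0, pow_zero, one_mul, hV0] at this
      exact hg0 this.symm
    have hcomp : ∀ᶠ x in nhds (0:ℝ), V (Φ x) = (Φ x)^m * g (Φ x) := hΦtend.eventually hgfac
    have hWev : ∀ᶠ x in nhdsWithin (0:ℝ) {(0:ℝ)}ᶜ, (U x)^m * g (Φ x) - g x = 0 := by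
      have hkey : ∀ᶠ x in nhds (0:ℝ), x^m * ((U x)^m * g (Φ x) - g x) = 0 := by
        filter_upwards [hInv, hgfac, hcomp] with x h1 h2 h3
        have hΦx : Φ x = x * U x := rfl
        have e1 : (x * U x)^m * g (Φ x) = x^m * g x := by
          rw [← hΦx, ← h3, h1, h2]
        calc x^m * ((U x)^m * g (Φ x) - g x)
            = (x * U x)^m * g (Φ x) - x^m * g x := by ring
          _ = 0 := by rw [e1]; ring
      rw [eventually_nhdsWithin_iff]
      filter_upwards [hkey] with x hx hxne
      have hx0 : x ≠ 0 := by simpa using hxne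
      exact (mul_eq_zero.mp hx).resolve_left (pow_ne_zero m hx0)
    have hgatΦ0 : AnalyticAt ℝ g (Φ 0) := by rwa [hΦ0]
    have hWanal : AnalyticAt ℝ (fun x => (U x)^m * g (Φ x) - g x) 0 :=
      ((hUat0.pow m).mul (hgatΦ0.comp hΦat0)).sub hgat
    have hW0 : (U 0)^m * g (Φ 0) - g 0 = 0 := by
      have t1 : Tendsto (fun x => (U x)^m * g (Φ x) - g x) (nhdsWithin (0:ℝ) {(0:ℝ)}ᶜ)
          (nhds ((U 0)^m * g (Φ 0) - g 0)) :=
        (hWanal.continuousAt.continuousWithinAt).tendsto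
      have t2 : Tendsto (fun x => (U x)^m * g (Φ x) - g x) (nhdsWithin (0:ℝ) {(0:ℝ)}ᶜ)
          (nhds 0) := Tendsto.congr' (hWev.mono fun x hx => hx.symm) tendsto_const_nhds
      exact tendsto_nhds_unique t1 t2
    have hθm : (c 1)^m = 1 := by
      have h2 : ((c 1)^m - 1) * g 0 = 0 := by
        rw [hU0, hΦ0] at hW0
        linear_combination hW0
      rcases mul_eq_zero.mp h2 with h | h
      · linarith
      · exact absurd h hg0
    have hθ1 : c 1 = 1 := by
      rcases lt_trichotomy (c 1) 1 with h | h | h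
      · exfalso
        have := pow_lt_one₀ hθ h (by omega : m ≠ 0)
        rw [hθm] at this; exact lt_irrefl 1 this
      · exact h
      · exfalso
        have := one_lt_pow₀ h (by omega : m ≠ 0)
        rw [hθm] at this; exact lt_irrefl 1 this
    have hWall : ∀ᶠ x in nhds (0:ℝ), (U x)^m * g (Φ x) - g x = 0 := by
      rw [eventually_nhdsWithin_iff] at hWev
      filter_upwards [hWev] with x hx
      by_cases hx0 : x = 0
      · rw [hx0]; exact hW0
      · exact hx (by simpa using hx0)
    have hUd : HasDerivAt U (deriv U 0) 0 := hUat0.differentiableAt.hasDerivAt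
    have hgd : HasDerivAt g (deriv g 0) 0 := hgat.differentiableAt.hasDerivAt
    have hΦd : HasDerivAt Φ 1 0 := by
      have h : HasDerivAt (fun x : ℝ => _root_.id x * U x) (1 * U 0 + _root_.id (0:ℝ) * deriv U 0) 0 :=
        (hasDerivAt_id (0:ℝ)).mul hUd
      simpa [hU0, hθ1] using h
    have hgd' : HasDerivAt g (deriv g 0) (Φ 0) := by rwa [hΦ0]
    have hgΦd : HasDerivAt (fun x => g (Φ x)) (deriv g 0 * 1) 0 := by
      exact hgd'.comp 0 hΦd
    have hWd : HasDerivAt (fun x => (U x)^m * g (Φ x) - g x)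
        (↑m * U 0 ^ (m - 1) * deriv U 0 * g (Φ 0) + U 0 ^ m * (deriv g 0 * 1) - deriv g 0) 0 :=
      ((hUd.pow m).mul hgΦd).sub hgd
    have hderW : deriv (fun x => (U x)^m * g (Φ x) - g x) 0 = 0 := by
      have heq0 : (fun x => (U x)^m * g (Φ x) - g x) =ᶠ[nhds (0:ℝ)] (fun _ => 0) := hWall
      rw [heq0.deriv_eq]
      simp
    have hu'0 : deriv U 0 = 0 := by
      have e := hWd.deriv
      rw [hderW, hU0, hθ1, hΦ0] at e
      rw [one_pow, one_pow, mul_one] at e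
      have e2 : (m:ℝ) * deriv U 0 * g 0 = 0 := by linarith
      have hmne : (m:ℝ) ≠ 0 := Nat.cast_ne_zero.mpr (by omega)
      rcases mul_eq_zero.mp e2 with h | h
      · rcases mul_eq_zero.mp h with h' | h'
        · exact absurd h' hmne
        · exact h'
      · exact absurd h hg0
    -- deriv V at 0 two ways: m = 1 and g 0 = -1
    have hVd : HasDerivAt V (0 - 1 - deriv U 0) 0 :=
      ((hasDerivAt_const (0:ℝ) (c 1)).sub (hasDerivAt_id 0)).sub hUd
    have hVfacd : HasDerivAt (fun z : ℝ => z^m * g z)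
        ((↑m * (0:ℝ)^(m-1)) * g 0 + (0:ℝ)^m * deriv g 0) 0 :=
      (hasDerivAt_pow m 0).mul hgd
    have hderV : deriv V 0 = deriv (fun z : ℝ => z^m * g z) 0 :=
      EventuallyEq.deriv_eq hgfac
    have hkeyV : (-1 : ℝ) = (↑m * (0:ℝ)^(m-1)) * g 0 := by
      have e1 := hVd.deriv
      have e2 := hVfacd.deriv
      rw [hderV, e2, hu'0] at e1
      have hz : (0:ℝ)^m = 0 := zero_pow (by omega)
      rw [hz] at e1
      linarith
    have hm_eq : m = 1 := by
      by_contra hcon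
      have : (0:ℝ)^(m-1) = 0 := zero_pow (by omega)
      rw [this] at hkeyV
      norm_num at hkeyV
    have hg0v : g 0 = -1 := by
      rw [hm_eq] at hkeyV
      norm_num at hkeyV
      linarith
    -- the function S
    set S : ℝ → ℝ := fun x => x + V x with hS_def
    have hSat0 : AnalyticAt ℝ S 0 := analyticAt_id.add hVat0
    have hS0 : S 0 = 0 := by simp [hS_def, hV0]
    have hSd : HasDerivAt S 0 0 := by
      have h := (hasDerivAt_id (0:ℝ)).add hVd
      have h2 : (1:ℝ) + (0 - 1 - deriv U 0) = 0 := by rw [hu'0]; ring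
      rw [h2] at h
      exact h
    have hUS : ∀ x : ℝ, U x = 1 - S x := by
      intro x
      show U x = 1 - (x + (c 1 - x - U x))
      rw [hθ1]; ring
    have hΦS : ∀ x : ℝ, Φ x = x * (1 - S x) := by
      intro x
      show x * U x = _
      rw [hUS]
    have hSinv : ∀ᶠ x in nhds (0:ℝ), S (Φ x) = (1 - x) * S x := by
      filter_upwards [hInv] with x h1
      show Φ x + V (Φ x) = (1 - x) * S x
      rw [h1, hΦS]
      have h2 : V x = S x - x := by
        show V x = (x + V x) - x
        ring
      rw [h2]
      ring
    rcases hSat0.eventually_eq_zero_or_eventually_ne_zero with hSz | hSne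
    · -- S ≡ 0 near 0  ⇒  f = α
      left
      have hUone : ∀ᶠ x in nhds (0:ℝ), U x = 1 := by
        filter_upwards [hSz] with x hx
        rw [hUS x, hx]
        ring
      have hesum : Summable (fun k : ℕ => if k = 0 then (1:ℝ) else 0) := by
        apply summable_of_ne_finset_zero (s := {0})
        intro b hb
        simp only [Finset.mem_singleton] at hb
        simp [hb]
      have hdsum : Summable (fun k => c (k+1) - if k = 0 then (1:ℝ) else 0) := cs1.sub hesum
      have hdz : sumF (fun k => c (k+1) - if k = 0 then (1:ℝ) else 0) =ᶠ[nhds 0] 0 := by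
        have habs : ∀ᶠ x in nhds (0:ℝ), |x| ≤ 1 := by
          filter_upwards [Metric.ball_mem_nhds (0:ℝ) one_pos] with y hy
          have := Metric.mem_ball.mp hy
          rw [Real.dist_eq, sub_zero] at this
          exact this.le
        filter_upwards [hUone, habs] with x hUx hx1
        have hE : HasSum (fun k : ℕ => (if k = 0 then (1:ℝ) else 0) * x ^ k) 1 := by
          have hfun2 : (fun k : ℕ => (if k = 0 then (1:ℝ) else 0) * x ^ k)
              = fun k => if k = 0 then (1:ℝ) else 0 := by
            funext k
            match k with
            | 0 => simp
            | (n+1) => simp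
          rw [hfun2]
          exact hasSum_ite_eq 0 1
        have hsub := (hUsum x hx1).sub hE
        have hfun3 : (fun k => c (k+1) * x^k - (if k = 0 then (1:ℝ) else 0) * x^k)
            = fun k => (c (k+1) - if k = 0 then (1:ℝ) else 0) * x^k := by
          funext k; ring
        rw [hfun3] at hsub
        have hts := hsub.tsum_eq
        show sumF (fun k => c (k+1) - if k = 0 then (1:ℝ) else 0) x = 0
        rw [show sumF (fun k => c (k+1) - if k = 0 then (1:ℝ) else 0) x = U x - 1 from hts]
        rw [hUx]
        ring
      have hcoef := sumF_zero_coeff hdsum hdz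
      have hc2' : ∀ k, c (k+2) = 0 := by
        intro k
        have := hcoef (k+1)
        simpa using this
      intro α hα
      have hfun : (fun k : ℕ => c k * α ^ k) = fun k => if k = 1 then α else 0 := by
        funext k
        match k with
        | 0 => simp [hc0]
        | 1 => simp [hθ1]
        | (n+2) => simp [hc2' n]
      have h := hsum α hα
      rw [hfun] at h
      exact h.unique (hasSum_ite_eq 1 α)
    · -- S not eventually zero: contradiction
      exfalso
      have horderS : analyticOrderAt S 0 ≠ ⊤ := by
        intro hcon
        have hcon2 : ∀ᶠ z in nhds (0:ℝ), S z = 0 := analyticOrderAt_eq_top.mp hcon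
        have h1 : ∀ᶠ z in nhdsWithin (0:ℝ) {(0:ℝ)}ᶜ, S z = 0 :=
          hcon2.filter_mono nhdsWithin_le_nhds
        rcases (hSne.and h1).exists with ⟨x, hx1, hx2⟩
        exact hx1 hx2
      obtain ⟨n, hn⟩ := WithTop.ne_top_iff_exists.mp horderS
      obtain ⟨K, hKat, hK0, hKfac⟩ := hSat0.analyticOrderAt_eq_natCast.mp hn.symm
      simp only [sub_zero, smul_eq_mul] at hKfac
      have hKd : HasDerivAt K (deriv K 0) 0 := hKat.differentiableAt.hasDerivAt
      have hn2 : 2 ≤ n := by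
        by_contra hcon
        have hcase : n = 0 ∨ n = 1 := by omega
        rcases hcase with h | h
        · have hh := hKfac.self_of_nhds
          rw [h, pow_zero, one_mul, hS0] at hh
          exact hK0 hh.symm
        · rw [h] at hKfac
          have e1 := hSd.deriv
          have hKd1 : HasDerivAt (fun z : ℝ => z^1 * K z)
              ((↑(1:ℕ) * (0:ℝ)^(1-1)) * K 0 + (0:ℝ)^1 * deriv K 0) 0 :=
            (hasDerivAt_pow 1 0).mul hKd
          have e2 := hKd1.deriv
          have e3 : deriv S 0 = deriv (fun z : ℝ => z^1 * K z) 0 :=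
            EventuallyEq.deriv_eq hKfac
          rw [e1, e2] at e3
          simp at e3
          exact hK0 (by linarith)
      have hKd' : HasDerivAt K (deriv K 0) (Φ 0) := by rwa [hΦ0]
      have hKΦd : HasDerivAt (fun x => K (Φ x)) (deriv K 0 * 1) 0 := by
        exact hKd'.comp 0 hΦd
      have hcompS : ∀ᶠ x in nhds (0:ℝ), S (Φ x) = (Φ x)^n * K (Φ x) := hΦtend.eventually hKfac
      have hTev : ∀ᶠ x in nhdsWithin (0:ℝ) {(0:ℝ)}ᶜ,
          (1 - S x)^n * K (Φ x) - (1 - x) * K x = 0 := by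
        have hkey : ∀ᶠ x in nhds (0:ℝ),
            x^n * ((1 - S x)^n * K (Φ x) - (1 - x) * K x) = 0 := by
          filter_upwards [hSinv, hKfac, hcompS] with x h1 h2 h3
          have e1 : (x * (1 - S x))^n * K (Φ x) = (1 - x) * (x^n * K x) := by
            rw [← hΦS x, ← h3, h1, h2]
          calc x^n * ((1 - S x)^n * K (Φ x) - (1 - x) * K x)
              = (x * (1 - S x))^n * K (Φ x) - (1 - x) * (x^n * K x) := by
                rw [mul_pow]; ring
            _ = 0 := by rw [e1]; ring
        rw [eventually_nhdsWithin_iff]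
        filter_upwards [hkey] with x hx hxne
        have hx0 : x ≠ 0 := by simpa using hxne
        exact (mul_eq_zero.mp hx).resolve_left (pow_ne_zero n hx0)
      have hKatΦ0 : AnalyticAt ℝ K (Φ 0) := by rwa [hΦ0]
      have hTanal : AnalyticAt ℝ (fun x => (1 - S x)^n * K (Φ x) - (1 - x) * K x) 0 :=
        (((analyticAt_const.sub hSat0).pow n).mul (hKatΦ0.comp hΦat0)).sub
          ((analyticAt_const.sub analyticAt_id).mul hKat)
      have hT0 : (1 - S 0)^n * K (Φ 0) - (1 - 0) * K 0 = 0 := by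
        have t1 : Tendsto (fun x => (1 - S x)^n * K (Φ x) - (1 - x) * K x)
            (nhdsWithin (0:ℝ) {(0:ℝ)}ᶜ) (nhds ((1 - S 0)^n * K (Φ 0) - (1 - 0) * K 0)) :=
          (hTanal.continuousAt.continuousWithinAt).tendsto
        have t2 : Tendsto (fun x => (1 - S x)^n * K (Φ x) - (1 - x) * K x)
            (nhdsWithin (0:ℝ) {(0:ℝ)}ᶜ) (nhds 0) :=
          Tendsto.congr' (hTev.mono fun x hx => hx.symm) tendsto_const_nhds
        exact tendsto_nhds_unique t1 t2
      have hTall : ∀ᶠ x in nhds (0:ℝ),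
          (1 - S x)^n * K (Φ x) - (1 - x) * K x = 0 := by
        rw [eventually_nhdsWithin_iff] at hTev
        filter_upwards [hTev] with x hx
        by_cases hx0 : x = 0
        · rw [hx0]; exact hT0
        · exact hx (by simpa using hx0)
      have hTd : HasDerivAt (fun x => (1 - S x)^n * K (Φ x) - (1 - x) * K x)
          (↑n * (1 - S 0) ^ (n - 1) * (0 - 0) * K (Φ 0) + (1 - S 0) ^ n * (deriv K 0 * 1) -
            ((0 - 1) * K 0 + (1 - 0) * deriv K 0)) 0 := ((((hasDerivAt_const (0:ℝ) (1:ℝ)).sub hSd).pow n).mul hKΦd).sub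
        (((hasDerivAt_const (0:ℝ) (1:ℝ)).sub (hasDerivAt_id' 0)).mul hKd)
      have hderT : deriv (fun x => (1 - S x)^n * K (Φ x) - (1 - x) * K x) 0 = 0 := by
        have heq0 : (fun x => (1 - S x)^n * K (Φ x) - (1 - x) * K x)
            =ᶠ[nhds (0:ℝ)] (fun _ => 0) := hTall
        rw [heq0.deriv_eq]
        simp
      have e := hTd.deriv
      rw [hderT, hS0, hΦ0] at e
      simp at e
      exact hK0 (by linarith)
end

section
/- Fix θ ∈ (1,2]. For any initial point (α,β) on the invariant line γ_θ = {(α,β) ∈ [0,1]² : β = α + 1 - θ}, the iterates V1^m(α,β) converge to (θ-1, 0). -/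
def V1 (q : ℝ × ℝ) : ℝ × ℝ := (q.1 * (1 - q.2), q.2 * (1 - q.1))

theorem stmt16 (θ : ℝ) (hθ : θ ∈ Set.Ioc (1 : ℝ) 2)
    (q : ℝ × ℝ) (hq : q ∈ Set.Icc (0 : ℝ) 1 ×ˢ Set.Icc (0 : ℝ) 1)
    (hline : q.2 = q.1 + 1 - θ) :
    Filter.Tendsto (fun m => V1^[m] q) Filter.atTop (nhds (θ - 1, 0)) := by
  obtain ⟨hθ1, hθ2⟩ := hθ
  obtain ⟨⟨hq10, hq11⟩, hq20, hq21⟩ := hq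
  set b : ℕ → ℝ := fun m => (V1^[m] q).2 with hb
  -- main invariant
  have key : ∀ m, (V1^[m] q).1 = b m + θ - 1 ∧ 0 ≤ b m ∧ b m ≤ q.2 * (2 - θ)^m := by
    intro m
    induction m with
    | zero => simp [hb]; constructor; linarith; linarith
    | succ n ih =>
      obtain ⟨h1, h2, h3⟩ := ih
      have hq2 : q.2 ≤ 2 - θ := by linarith
      have hpow1 : (2 - θ)^n ≤ 1 := pow_le_one₀ (by linarith) (by linarith)
      have hle : b n ≤ 2 - θ := by
        calc b n ≤ q.2 * (2 - θ)^n := h3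
        _ ≤ (2 - θ) * 1 := by
              apply mul_le_mul hq2 hpow1 (pow_nonneg (by linarith) n) (by linarith)
        _ = 2 - θ := mul_one _
      have hstep : V1^[n+1] q = V1 (V1^[n] q) := Function.iterate_succ_apply' V1 n q
      have hb1 : b (n+1) = b n * (2 - θ - b n) := by
        simp only [hb, hstep, V1, h1]; ring
      refine ⟨?_, ?_, ?_⟩
      · simp only [hb, hstep, V1, h1]
        ring
      · rw [hb1]; exact mul_nonneg h2 (by linarith)
      · rw [hb1, pow_succ]
        calc b n * (2 - θ - b n) ≤ b n * (2 - θ) := by nlinarith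
        _ ≤ (q.2 * (2 - θ)^n) * (2 - θ) := by nlinarith
        _ = q.2 * ((2 - θ)^n * (2 - θ)) := by ring
  -- b tends to 0
  have hbt : Filter.Tendsto b Filter.atTop (nhds 0) := by
    have hg : Filter.Tendsto (fun m => q.2 * (2 - θ)^m) Filter.atTop (nhds 0) := by
      have habs : |2 - θ| < 1 := by rw [abs_lt]; constructor <;> linarith
      have := tendsto_pow_atTop_nhds_zero_of_abs_lt_one habs
      simpa using (this.const_mul q.2)
    exact squeeze_zero (fun m => (key m).2.1) (fun m => (key m).2.2) hg
  have h1t : Filter.Tendsto (fun m => (V1^[m] q).1) Filter.atTop (nhds (θ - 1)) := by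
    have : (fun m => (V1^[m] q).1) = fun m => b m + θ - 1 := funext fun m => (key m).1
    have h2 : (fun m => b m + θ - 1) = fun m => b m + (θ - 1) := by
      funext m; ring
    rw [this, h2]
    simpa using hbt.add_const (θ - 1)
  have h2t : Filter.Tendsto (fun m => (V1^[m] q).2) Filter.atTop (nhds 0) := hbt
  exact h1t.prodMk_nhds h2t
end

section
/- If p1 > 1 > p2 > 0, then the set M1 = {(α,β) ∈ [0,1]² : β ≥ α} is invariant under the map V(α,β) = (α(1-β)/(1+(p1-1)αβ), β(1-α)/(1+(p2-1)αβ)); i.e., if β ≥ α then β(1-α)/(1+(p2-1)αβ) ≥ α(1-β)/(1+(p1-1)αβ). -/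
theorem stmt18 (p1 p2 : ℝ) (h1 : 1 < p1) (h2 : p2 < 1) (h2' : 0 < p2)
    (α β : ℝ) (h : (α, β) ∈ Set.Icc (0 : ℝ) 1 ×ˢ Set.Icc (0 : ℝ) 1)
    (hle : α ≤ β) :
    α * (1 - β) / (1 + (p1 - 1) * α * β) ≤ β * (1 - α) / (1 + (p2 - 1) * α * β) := by
  simp only [Set.mem_prod, Set.mem_Icc] at h
  obtain ⟨⟨ha0, ha1⟩, hb0, hb1⟩ := h
  have hab : 0 ≤ α * β := mul_nonneg ha0 hb0
  have hab1 : α * β ≤ 1 := by nlinarith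
  have hd1 : 0 < 1 + (p1 - 1) * α * β := by nlinarith
  have hd2 : 0 < 1 + (p2 - 1) * α * β := by nlinarith
  rw [div_le_div_iff₀ hd1 hd2]
  nlinarith [mul_nonneg (show (0:ℝ) ≤ β * (1 - α) - α * (1 - β) by nlinarith) hd1.le,
    mul_nonneg (mul_nonneg ha0 (sub_nonneg.2 hb1))
      (show (0:ℝ) ≤ (p1 - p2) * (α * β) by nlinarith)]
end

section
/- Suppose σ1 = a and σ2 = b. Then for each θ ∈ ℝ the surface Ω_θ = {(x,y,u,v) ∈ S^{2,2} : v/(u+v) = x/(x+y) + 1 - θ} is invariant under W, and Ω_1 = {(x,y,u,v) ∈ S^{2,2} : yv = xu}. -/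
lemma pos_of_pair {x y : ℝ} (hx : 0 ≤ x) (hy : 0 ≤ y) (h : (x, y) ≠ ((0:ℝ), (0:ℝ))) :
    0 < x + y := by
  rcases hx.eq_or_lt with h1 | h1
  · rcases hy.eq_or_lt with h2 | h2
    · exact absurd (by simp [← h1, ← h2]) h
    · linarith
  · linarith

theorem stmt19 (a b : ℝ) (ha : 0 < a) (hb : 0 < b) (hab : a + b = 1) :
    (∀ θ : ℝ, Set.MapsTo (W a b a b)
      {p : ℝ × ℝ × ℝ × ℝ | p ∈ S22 ∧
        p.2.2.2 / (p.2.2.1 + p.2.2.2) = p.1 / (p.1 + p.2.1) + 1 - θ}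
      {p : ℝ × ℝ × ℝ × ℝ | p ∈ S22 ∧
        p.2.2.2 / (p.2.2.1 + p.2.2.2) = p.1 / (p.1 + p.2.1) + 1 - θ}) ∧
    {p : ℝ × ℝ × ℝ × ℝ | p ∈ S22 ∧
        p.2.2.2 / (p.2.2.1 + p.2.2.2) = p.1 / (p.1 + p.2.1) + 1 - 1} =
    {p : ℝ × ℝ × ℝ × ℝ | p ∈ S22 ∧ p.2.1 * p.2.2.2 = p.1 * p.2.2.1} := by
  constructor
  · intro θ p hp
    obtain ⟨x, y, u, v⟩ := p
    obtain ⟨⟨hx, hy, hu, hv, hsum, hxy, huv⟩, hθ⟩ := hp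
    simp only [] at hx hy hu hv hsum hxy huv hθ
    have hxyp : 0 < x + y := pos_of_pair hx hy hxy
    have huvp : 0 < u + v := pos_of_pair hu hv huv
    have hN : (x + y) * (u + v) ≠ 0 := by positivity
    have hxyne : x + y ≠ 0 := ne_of_gt hxyp
    have huvne : u + v ≠ 0 := ne_of_gt huvp
    constructor
    · refine ⟨by simp [W]; positivity, by simp [W]; positivity, by simp [W]; positivity,
        by simp [W]; positivity, ?_, ?_, ?_⟩
      · simp only [W]
        field_simp
        ring_nf
        nlinarith [mul_pos hxyp huvp]
      · simp only [W]
        intro h0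
        rw [Prod.mk.injEq] at h0
        obtain ⟨h1, h2⟩ := h0
        rw [div_eq_zero_iff] at h1 h2
        rcases h1 with h1 | h1; swap; · exact hN h1
        rcases h2 with h2 | h2; swap; · exact hN h2
        have : a * (x + y) * (u + v) = 0 := by nlinarith
        have := mul_pos (mul_pos ha hxyp) huvp
        linarith
      · simp only [W]
        intro h0
        rw [Prod.mk.injEq] at h0
        obtain ⟨h1, h2⟩ := h0
        rw [div_eq_zero_iff] at h1 h2
        rcases h1 with h1 | h1; swap; · exact hN h1
        rcases h2 with h2 | h2; swap; · exact hN h2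
        have : b * (x + y) * (u + v) = 0 := by nlinarith
        have := mul_pos (mul_pos hb hxyp) huvp
        linarith
    · simp only [W]
      have hXY : a * x * u / ((x + y) * (u + v)) +
          (a * x * v + a * y * u + a * y * v) / ((x + y) * (u + v)) = a := by
        field_simp; ring
      have hUV : (b * x * v + b * x * u + b * y * u) / ((x + y) * (u + v)) +
          b * y * v / ((x + y) * (u + v)) = b := by
        field_simp; ring
      rw [hXY, hUV]
      have e1 : b * y * v / ((x + y) * (u + v)) / b = y * v / ((x + y) * (u + v)) := by
        field_simp
      have e2 : a * x * u / ((x + y) * (u + v)) / a = x * u / ((x + y) * (u + v)) := by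
        field_simp
      have h3 : v / (u + v) - x / (x + y) = (y * v - x * u) / ((x + y) * (u + v)) := by
        field_simp; ring
      have h4 : y * v / ((x + y) * (u + v)) - x * u / ((x + y) * (u + v)) =
          (y * v - x * u) / ((x + y) * (u + v)) := div_sub_div_same _ _ _
      rw [e1, e2]
      linarith
  · ext ⟨x, y, u, v⟩
    simp only [Set.mem_setOf_eq, and_congr_right_iff]
    intro hS
    obtain ⟨hx, hy, hu, hv, hsum, hxy, huv⟩ := hS
    simp only [] at hx hy hu hv hsum hxy huv
    have hxyp : 0 < x + y := pos_of_pair hx hy hxy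
    have huvp : 0 < u + v := pos_of_pair hu hv huv
    have hxyne : x + y ≠ 0 := ne_of_gt hxyp
    have huvne : u + v ≠ 0 := ne_of_gt huvp
    constructor
    · intro h
      field_simp at h
      linear_combination h
    · intro h
      field_simp
      linear_combination h
end
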